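/- There exists a function Ĝ : ℂ → ℂ, complex-differentiable on the open ball B(1,1), with Ĝ(x) ∈ ℝ for every real x ∈ B(1,1), such that φ_←(z) = (4/3)·(z−1)^{3/2}·(1 + (z−1)·Ĝ(z)) for every z ∈ B(1,1) with z ∉ (−∞,1]. -/

import Mathlib

open Complex Metric

/-- `φ_←(z) = 2(z−1)·∫_0^1 (t(z−1))^{1/2}·(1+t(z−1))^{−1/2} dt`, the integral of
`2(s−1)^{1/2} s^{−1/2}` over the straight segment from `1` to `z` (principal powers). -/
noncomputable def phiLeft (z : ℂ) : ℂ :=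
  2 * (z - 1) *
    ∫ t in (0:ℝ)..1, ((t : ℂ) * (z - 1)) ^ ((1 : ℂ)/2) * (1 + (t : ℂ) * (z - 1)) ^ (-((1 : ℂ)/2))

open Complex Metric Set Filter intervalIntegral MeasureTheory
open scoped Topology Interval

-- helper: the analytic part of the integral
noncomputable def Fc (z : ℂ) : ℂ :=
  ∫ t in (0:ℝ)..1, (t:ℂ) ^ ((1:ℂ)/2) * (1 + (t:ℂ) * (z - 1)) ^ (-((1:ℂ)/2))

lemma base_slit {z : ℂ} {t : ℝ} (ht0 : 0 ≤ t) (ht1 : t ≤ 1)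
    (hz : ‖z - 1‖ < 1) : (1 + (t:ℂ) * (z - 1)) ∈ Complex.slitPlane := by
  rw [Complex.mem_slitPlane_iff]
  left
  have h1 : |(z - 1).re| ≤ ‖z - 1‖ := Complex.abs_re_le_norm _
  have h2 : (1 + (t:ℂ) * (z - 1)).re = 1 + t * (z - 1).re := by simp
  rw [h2]
  rcases abs_le.mp h1 with ⟨hl, _⟩
  nlinarith [mul_le_mul_of_nonneg_left hl ht0,
    mul_le_of_le_one_left (norm_nonneg (z - 1)) ht1]

lemma base_abs {z : ℂ} {t : ℝ} (ht0 : 0 ≤ t) (ht1 : t ≤ 1) :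
    1 - ‖z - 1‖ ≤ ‖1 + (t:ℂ) * (z - 1)‖ := by
  have h : (1:ℝ) ≤ ‖1 + (t:ℂ) * (z - 1)‖ + ‖(t:ℂ) * (z - 1)‖ := by
    simpa using norm_add_le (1 + (t:ℂ) * (z - 1)) (-((t:ℂ) * (z - 1)))
  have h2 : ‖(t:ℂ) * (z - 1)‖ ≤ ‖z - 1‖ := by
    rw [norm_mul, Complex.norm_real, Real.norm_eq_abs, _root_.abs_of_nonneg ht0]
    exact mul_le_of_le_one_left (norm_nonneg (z - 1)) ht1
  linarith

lemma integrand_contOn {z : ℂ} (hz : ‖z - 1‖ < 1) :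
    ContinuousOn (fun t : ℝ => (t:ℂ) ^ ((1:ℂ)/2) * (1 + (t:ℂ) * (z - 1)) ^ (-((1:ℂ)/2)))
      (Set.Icc (0:ℝ) 1) := by
  intro t ht
  apply ContinuousAt.continuousWithinAt
  apply ContinuousAt.mul
  · exact continuousAt_ofReal_cpow_const t _ (Or.inl (by norm_num))
  · have hbase : ContinuousAt (fun t : ℝ => 1 + (t:ℂ) * (z - 1)) t := by fun_prop
    exact hbase.cpow continuousAt_const (base_slit ht.1 ht.2 hz)

lemma Fc_hasDerivAt {z₀ : ℂ} (hz₀ : z₀ ∈ ball (1:ℂ) 1) : DifferentiableAt ℂ Fc z₀ := by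
  have hr : ‖z₀ - 1‖ < 1 := by
    simpa [Metric.mem_ball, Complex.dist_eq] using hz₀
  set r := ‖z₀ - 1‖ with hrdef
  have hr0 : 0 ≤ r := norm_nonneg _
  set R : ℝ := (1 + r)/2 with hRdef
  set ε : ℝ := (1 - r)/2 with hεdef
  have hε : 0 < ε := by simp only [hεdef]; linarith
  have hR1 : R < 1 := by simp only [hRdef]; linarith
  have hR0 : 0 < 1 - R := by linarith
  -- any z in ball z₀ ε has abs (z-1) ≤ R
  have key : ∀ z ∈ ball z₀ ε, ‖z - 1‖ ≤ R := by
    intro z hz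
    have h1 : ‖z - z₀‖ < ε := by
      simpa [Metric.mem_ball, Complex.dist_eq] using hz
    have h2 : ‖z - 1‖ ≤ ‖z - z₀‖ + ‖z₀ - 1‖ := by
      simpa using norm_add_le (z - z₀) (z₀ - 1)
    simp only [hRdef]; simp only [hεdef] at h1; linarith
  have hlt1 : ∀ z ∈ ball z₀ ε, ‖z - 1‖ < 1 := fun z hz =>
    lt_of_le_of_lt (key z hz) hR1
  set F' : ℂ → ℝ → ℂ := fun z t =>
    (t:ℂ) ^ ((1:ℂ)/2) * (-((1:ℂ)/2) * (1 + (t:ℂ) * (z - 1)) ^ (-((1:ℂ)/2) - 1) * (t:ℂ))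
    with hF'def
  have hmeas : ∀ᶠ z in 𝓝 z₀, AEStronglyMeasurable
      (fun t : ℝ => (t:ℂ) ^ ((1:ℂ)/2) * (1 + (t:ℂ) * (z - 1)) ^ (-((1:ℂ)/2)))
      (MeasureTheory.volume.restrict (Ι (0:ℝ) 1)) := by
    filter_upwards [ball_mem_nhds z₀ hε] with z hz
    exact (((integrand_contOn (hlt1 z hz)).mono
      (by rw [Set.uIoc_of_le zero_le_one]; exact Set.Ioc_subset_Icc_self)).aestronglyMeasurable
      measurableSet_uIoc)
  have hint : IntervalIntegrable
      (fun t : ℝ => (t:ℂ) ^ ((1:ℂ)/2) * (1 + (t:ℂ) * (z₀ - 1)) ^ (-((1:ℂ)/2)))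
      MeasureTheory.volume 0 1 := by
    apply ContinuousOn.intervalIntegrable
    rw [Set.uIcc_of_le zero_le_one]
    exact integrand_contOn hr
  have hF'meas : AEStronglyMeasurable (F' z₀)
      (MeasureTheory.volume.restrict (Ι (0:ℝ) 1)) := by
    apply ContinuousOn.aestronglyMeasurable _ measurableSet_uIoc
    rw [Set.uIoc_of_le zero_le_one]
    intro t ht
    apply ContinuousAt.continuousWithinAt
    have hic := Set.Ioc_subset_Icc_self ht
    apply ContinuousAt.mul
    · exact continuousAt_ofReal_cpow_const t _ (Or.inl (by norm_num))
    · apply ContinuousAt.mul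
      · apply ContinuousAt.mul continuousAt_const
        have hbase : ContinuousAt (fun t : ℝ => 1 + (t:ℂ) * (z₀ - 1)) t := by fun_prop
        exact hbase.cpow continuousAt_const (base_slit hic.1 hic.2 hr)
      · fun_prop
  have hbound : ∀ᵐ t ∂(MeasureTheory.volume), t ∈ Ι (0:ℝ) 1 →
      ∀ z ∈ ball z₀ ε, ‖F' z t‖ ≤ (1 - R) ^ (-(3/2) : ℝ) := by
    apply Filter.Eventually.of_forall
    intro t ht z hz
    rw [Set.uIoc_of_le zero_le_one] at ht
    have ht0 : 0 < t := ht.1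
    have ht1 : t ≤ 1 := ht.2
    have habs : 1 - R ≤ ‖1 + (t:ℂ) * (z - 1)‖ := by
      have := base_abs (z := z) ht0.le ht1
      have := key z hz
      linarith
    have hb0 : (1 + (t:ℂ) * (z - 1)) ≠ 0 := by
      intro h
      rw [h] at habs
      simp at habs
      linarith
    have e1 : ‖(t:ℂ) ^ ((1:ℂ)/2)‖ ≤ 1 := by
      rw [Complex.norm_cpow_eq_rpow_re_of_pos ht0]
      exact Real.rpow_le_one ht0.le ht1 (by norm_num)
    have e2 : ‖(1 + (t:ℂ) * (z - 1)) ^ (-((1:ℂ)/2) - 1)‖ ≤ (1 - R) ^ (-(3/2) : ℝ) := by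
      rw [Complex.norm_cpow_of_ne_zero hb0]
      have : (-((1:ℂ)/2) - 1).re = -(3/2) := by norm_num
      have him : (-((1:ℂ)/2) - 1).im = 0 := by norm_num
      rw [this, him, mul_zero, Real.exp_zero, div_one]
      exact Real.rpow_le_rpow_of_nonpos hR0 habs (by norm_num)
    have e3 : ‖(t:ℂ)‖ ≤ 1 := by
      rw [Complex.norm_real, Real.norm_eq_abs, _root_.abs_of_nonneg ht0.le]
      exact ht1
    have hpos : (0:ℝ) ≤ (1 - R) ^ (-(3/2) : ℝ) := Real.rpow_nonneg hR0.le _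
    calc ‖F' z t‖ = ‖(t:ℂ) ^ ((1:ℂ)/2)‖ * (‖-((1:ℂ)/2)‖ *
          ‖(1 + (t:ℂ) * (z - 1)) ^ (-((1:ℂ)/2) - 1)‖ * ‖(t:ℂ)‖) := by
          simp only [hF'def, norm_mul]
      _ ≤ 1 * (1 * ((1 - R) ^ (-(3/2) : ℝ)) * 1) := by
          have hn : ‖-((1:ℂ)/2)‖ ≤ 1 := by norm_num
          gcongr
      _ = (1 - R) ^ (-(3/2) : ℝ) := by ring
  have hbint : IntervalIntegrable (fun _ : ℝ => (1 - R) ^ (-(3/2) : ℝ))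
      MeasureTheory.volume 0 1 := intervalIntegrable_const
  have hdiff : ∀ᵐ t ∂(MeasureTheory.volume), t ∈ Ι (0:ℝ) 1 →
      ∀ z ∈ ball z₀ ε, HasDerivAt
        (fun z => (t:ℂ) ^ ((1:ℂ)/2) * (1 + (t:ℂ) * (z - 1)) ^ (-((1:ℂ)/2))) (F' z t) z := by
    apply Filter.Eventually.of_forall
    intro t ht z hz
    rw [Set.uIoc_of_le zero_le_one] at ht
    have hb : HasDerivAt (fun z : ℂ => 1 + (t:ℂ) * (z - 1)) (t:ℂ) z := by
      simpa using (((hasDerivAt_id z).sub_const 1).const_mul (t:ℂ)).const_add 1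
    have := (hb.cpow_const (c := -((1:ℂ)/2)) (base_slit ht.1.le ht.2 (hlt1 z hz))).const_mul
      ((t:ℂ) ^ ((1:ℂ)/2))
    simpa [hF'def, mul_assoc] using this
  have := (intervalIntegral.hasDerivAt_integral_of_dominated_loc_of_deriv_le (ball_mem_nhds z₀ hε) hmeas hint
    hF'meas hbound hbint hdiff).2
  exact this.differentiableAt

lemma Fc_one : Fc 1 = 2/3 := by
  have h : ∀ t ∈ [[(0:ℝ), 1]],
      (t:ℂ) ^ ((1:ℂ)/2) * (1 + (t:ℂ) * ((1:ℂ) - 1)) ^ (-((1:ℂ)/2))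
        = ((t ^ ((1:ℝ)/2) : ℝ) : ℂ) := by
    intro t ht
    rw [Set.uIcc_of_le zero_le_one] at ht
    have := Complex.ofReal_cpow ht.1 (1/2)
    push_cast at this
    rw [← this]
    simp
  rw [Fc, intervalIntegral.integral_congr h, intervalIntegral.integral_ofReal,
    integral_rpow (Or.inl (by norm_num))]
  norm_num [Real.zero_rpow]

lemma Fc_real {x : ℝ} (hx : |x - 1| < 1) :
    Fc x = ((∫ t in (0:ℝ)..1, t ^ ((1:ℝ)/2) * (1 + t * (x - 1)) ^ (-(1/2) : ℝ)) : ℝ) := by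
  have hx0 : 0 < x := by cases abs_lt.mp hx; linarith
  have h : ∀ t ∈ [[(0:ℝ), 1]],
      (t:ℂ) ^ ((1:ℂ)/2) * (1 + (t:ℂ) * ((x:ℂ) - 1)) ^ (-((1:ℂ)/2))
        = ((t ^ ((1:ℝ)/2) * (1 + t * (x - 1)) ^ (-(1/2) : ℝ) : ℝ) : ℂ) := by
    intro t ht
    rw [Set.uIcc_of_le zero_le_one] at ht
    have hb : (0:ℝ) ≤ 1 + t * (x - 1) := by nlinarith [ht.1, ht.2, mul_nonneg ht.1 hx0.le]
    have h1 := Complex.ofReal_cpow ht.1 (1/2)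
    have h2 := Complex.ofReal_cpow hb (-(1/2))
    push_cast at h1 h2
    rw [Complex.ofReal_mul, h1, h2]
  rw [Fc, intervalIntegral.integral_congr h, intervalIntegral.integral_ofReal]

lemma cpow_ofReal_mul {t : ℝ} (ht : 0 < t) {w : ℂ} (hw : w ≠ 0) (c : ℂ) :
    ((t:ℂ) * w) ^ c = (t:ℂ) ^ c * w ^ c := by
  have ht' : (t:ℂ) ≠ 0 := by exact_mod_cast ht.ne'
  rw [Complex.cpow_def_of_ne_zero (mul_ne_zero ht' hw), Complex.cpow_def_of_ne_zero ht',
    Complex.cpow_def_of_ne_zero hw, ← Complex.exp_add, Complex.log_ofReal_mul ht hw,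
    ← Complex.ofReal_log ht.le, add_mul, Complex.exp_add]

noncomputable def gAux (z : ℂ) : ℂ := 3/2 * Fc z - 1

lemma gAux_one : gAux 1 = 0 := by
  rw [gAux, Fc_one]; norm_num

lemma gAux_diffAt {z : ℂ} (hz : z ∈ ball (1:ℂ) 1) : DifferentiableAt ℂ gAux z :=
  ((Fc_hasDerivAt hz).const_mul _).sub_const 1

lemma slope_gAux_im {x : ℝ} (hx : |x - 1| < 1) (hx1 : (x:ℂ) ≠ 1) :
    (slope gAux 1 (x:ℂ)).im = 0 := by
  have hx1' : x - 1 ≠ 0 := by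
    intro h
    apply hx1
    have : x = 1 := by linarith [sub_eq_zero.mp h]
    simp [this]
  rw [slope_def_field, gAux_one, gAux, Fc_real hx]
  have : (3/2 * ((∫ t in (0:ℝ)..1, t ^ ((1:ℝ)/2) * (1 + t * (x - 1)) ^ (-(1/2) : ℝ) : ℝ) : ℂ)
      - 1 - 0) / ((x:ℂ) - 1)
      = (((3/2 * (∫ t in (0:ℝ)..1, t ^ ((1:ℝ)/2) * (1 + t * (x - 1)) ^ (-(1/2) : ℝ)) - 1)
        / (x - 1) : ℝ) : ℂ) := by
    push_cast
    ring
  rw [this, Complex.ofReal_im]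

lemma one_mem_ball : (1:ℂ) ∈ ball (1:ℂ) 1 := by
  simp [Metric.mem_ball]

lemma GAux_diffOn : DifferentiableOn ℂ (dslope gAux 1) (ball (1:ℂ) 1) := by
  intro z hz
  by_cases h : z = 1
  · subst h
    have hA : AnalyticAt ℂ gAux 1 := by
      apply DifferentiableOn.analyticAt (s := ball (1:ℂ) 1)
        (fun w hw => (gAux_diffAt hw).differentiableWithinAt)
      exact isOpen_ball.mem_nhds hz
    obtain ⟨p, hp⟩ := hA
    exact (hp.has_fpower_series_dslope_fslope.analyticAt).differentiableAt.differentiableWithinAt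
  · exact ((differentiableAt_dslope_of_ne h).mpr (gAux_diffAt hz)).differentiableWithinAt

lemma GAux_real {x : ℝ} (hx : (x:ℂ) ∈ ball (1:ℂ) 1) : (dslope gAux 1 (x:ℂ)).im = 0 := by
  have hx' : |x - 1| < 1 := by
    have : ‖(x:ℂ) - 1‖ < 1 := by
      simpa [Metric.mem_ball, Complex.dist_eq] using hx
    rwa [show ((x:ℂ) - 1) = ((x - 1 : ℝ) : ℂ) by push_cast; ring, Complex.norm_real, Real.norm_eq_abs] at this
  by_cases h : (x:ℂ) = 1
  · rw [h, dslope_same]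
    -- derivative at 1 is a limit of real slopes
    have hd : HasDerivAt gAux (deriv gAux 1) 1 := (gAux_diffAt one_mem_ball).hasDerivAt
    rw [hasDerivAt_iff_tendsto_slope] at hd
    have hmap : Tendsto (fun y : ℝ => (y:ℂ)) (𝓝[≠] (1:ℝ)) (𝓝[≠] (1:ℂ)) := by
      apply Tendsto.inf
      · exact (Complex.continuous_ofReal.tendsto 1)
      · apply tendsto_principal_principal.2
        intro y hy
        simp only [Set.mem_compl_iff, Set.mem_singleton_iff] at hy ⊢
        exact_mod_cast hy
    have h1 : Tendsto (fun y : ℝ => (slope gAux 1 (y:ℂ)).im) (𝓝[≠] (1:ℝ))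
        (𝓝 ((deriv gAux 1).im)) := (Complex.continuous_im.tendsto _).comp (hd.comp hmap)
    have h2 : Tendsto (fun y : ℝ => (slope gAux 1 (y:ℂ)).im) (𝓝[≠] (1:ℝ)) (𝓝 0) := by
      apply Tendsto.congr' _ tendsto_const_nhds
      have hmem : {y : ℝ | |y - 1| < 1} ∈ 𝓝[≠] (1:ℝ) := by
        apply nhdsWithin_le_nhds
        have : Continuous fun y : ℝ => |y - 1| := by fun_prop
        have := this.tendsto 1
        simp only [sub_self, abs_zero] at this
        exact this (Iio_mem_nhds one_pos)
      filter_upwards [hmem, self_mem_nhdsWithin] with y hy hy'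
      have hy1 : (y:ℂ) ≠ 1 := by
        simp only [Set.mem_compl_iff, Set.mem_singleton_iff] at hy'
        exact_mod_cast hy'
      exact (slope_gAux_im hy hy1).symm
    exact tendsto_nhds_unique h1 h2
  · rw [dslope_of_ne _ h]
    exact slope_gAux_im hx' h

/-- There is a function `Ĝ`, analytic on `B(1,1)` and real on real points,
with `φ_←(z) = (4/3)(z−1)^{3/2}(1 + (z−1)Ĝ(z))` off the cut `(−∞,1]`. -/
theorem stmt_2 :
    ∃ G : ℂ → ℂ, DifferentiableOn ℂ G (ball (1 : ℂ) 1) ∧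
      (∀ x : ℝ, (x : ℂ) ∈ ball (1 : ℂ) 1 → (G x).im = 0) ∧
      ∀ z ∈ ball (1 : ℂ) 1, z ∉ (Complex.ofReal '' Set.Iic 1) →
        phiLeft z = (4/3 : ℂ) * (z - 1) ^ ((3 : ℂ)/2) * (1 + (z - 1) * G z) := by
  refine ⟨dslope gAux 1, GAux_diffOn, fun x hx => GAux_real hx, ?_⟩
  intro z hz hcut
  have hz1 : z ≠ 1 := by
    intro h
    exact hcut ⟨1, Set.mem_Iic.mpr le_rfl, by simp [h]⟩
  have hw : z - 1 ≠ 0 := sub_ne_zero.mpr hz1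
  have hA : ∀ t ∈ [[(0:ℝ), 1]],
      ((t:ℂ) * (z - 1)) ^ ((1:ℂ)/2) * (1 + (t:ℂ) * (z - 1)) ^ (-((1:ℂ)/2))
      = (z - 1) ^ ((1:ℂ)/2) * ((t:ℂ) ^ ((1:ℂ)/2) * (1 + (t:ℂ) * (z - 1)) ^ (-((1:ℂ)/2))) := by
    intro t ht
    rw [Set.uIcc_of_le zero_le_one] at ht
    rcases eq_or_lt_of_le ht.1 with h0 | h0
    · simp [← h0, Complex.zero_cpow (show ((1:ℂ)/2) ≠ 0 by norm_num)]
    · rw [cpow_ofReal_mul h0 hw]; ring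
  have hint : phiLeft z = 2 * (z - 1) * ((z - 1) ^ ((1:ℂ)/2) * Fc z) := by
    rw [phiLeft, intervalIntegral.integral_congr hA, intervalIntegral.integral_const_mul, Fc]
  have hds : (z - 1) * dslope gAux 1 z = gAux z := by
    have h := sub_smul_dslope gAux 1 z
    rw [smul_eq_mul] at h
    rw [h, gAux_one, sub_zero]
  have hpow : (z - 1) ^ ((3:ℂ)/2) = (z - 1) * (z - 1) ^ ((1:ℂ)/2) := by
    have h32 : ((3:ℂ)/2) = 1 + (1:ℂ)/2 := by norm_num
    rw [h32, Complex.cpow_add _ _ hw, Complex.cpow_one]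
  rw [hint, hpow, hds, gAux]
  ring
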